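/- Let (F_1, F_2) be a Nash equilibrium of the single-item all-pay auction with parameters (B_1, B_2, v_1, v_2) with B_1 ≠ B_2 and inf Supp(F_1) = inf Supp(F_2) = 0; let s be the player with the larger budget and w the other player. If v_s = L, then: player s's expected equilibrium utility equals 0 and player w's expected equilibrium utility equals v_w − L; moreover F_s({0}) = (v_w − L)/v_w, F_s({L}) = 0, F_w({0}) = 0, and F_w({L}) = 0. -/

import Mathlib

open MeasureTheory Set

noncomputable section

/-- `L = min {B₁, B₂, v₁, v₂}` for the single-item auction. -/
def Lval (B v : Fin 2 → ℝ) : ℝ := min (min (B 0) (B 1)) (min (v 0) (v 1))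

/-- Probability that player `i` wins the single item when bidding `xi` while the
opponent bids `xo`: the strictly higher bid wins; on a tie at
`min {B₁, B₂, v₁, v₂}` the player with the strictly larger `min {Bᵢ, vᵢ}` wins,
and all other ties are resolved by a fair coin. -/
def winProb (B v : Fin 2 → ℝ) (i : Fin 2) (xi xo : ℝ) : ℝ :=
  if xo < xi then 1
  else if xi < xo then 0
  else if xi = Lval B v ∧ min (B (1 - i)) (v (1 - i)) < min (B i) (v i) then 1
  else if xi = Lval B v ∧ min (B i) (v i) < min (B (1 - i)) (v (1 - i)) then 0
  else 1 / 2

/-- Expected utility of player `i` from the pure bids `xi` (own) and `xo` (opponent):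
he pays his bid in any case and receives `v i` with his winning probability. -/
def payoff (B v : Fin 2 → ℝ) (i : Fin 2) (xi xo : ℝ) : ℝ :=
  winProb B v i xi xo * v i - xi

/-- A mixed strategy of a player with budget `Bi`: a probability measure on `[0, Bi]`. -/
def IsStrategy (Bi : ℝ) (μ : Measure ℝ) : Prop :=
  IsProbabilityMeasure μ ∧ μ (Icc 0 Bi) = 1

/-- Expected utility of player `i` when he plays `μ` and the opponent plays `ν`. -/
def expUtil (B v : Fin 2 → ℝ) (i : Fin 2) (μ ν : Measure ℝ) : ℝ :=
  ∫ xi, (∫ xo, payoff B v i xi xo ∂ν) ∂μ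

/-- `(F 0, F 1)` is a (mixed) Nash equilibrium of the single-item all-pay auction. -/
def IsNash (B v : Fin 2 → ℝ) (F : Fin 2 → Measure ℝ) : Prop :=
  (∀ i, IsStrategy (B i) (F i)) ∧
  ∀ i, ∀ μ, IsStrategy (B i) μ →
    expUtil B v i μ (F (1 - i)) ≤ expUtil B v i (F i) (F (1 - i))

/-- The (topological) support of a mixed strategy. -/
def supp (μ : Measure ℝ) : Set ℝ := {x | ∀ U ∈ nhds x, μ U ≠ 0}

/-! ### Auxiliary development -/

/-- Tie-winning probability of player `i` at bid `x`. -/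
def tie (B v : Fin 2 → ℝ) (i : Fin 2) (x : ℝ) : ℝ :=
  if x = Lval B v ∧ min (B (1 - i)) (v (1 - i)) < min (B i) (v i) then 1
  else if x = Lval B v ∧ min (B i) (v i) < min (B (1 - i)) (v (1 - i)) then 0
  else 1 / 2

lemma tie_nonneg (B v : Fin 2 → ℝ) (i : Fin 2) (x : ℝ) : 0 ≤ tie B v i x := by
  unfold tie; split_ifs <;> norm_num

lemma tie_le_one (B v : Fin 2 → ℝ) (i : Fin 2) (x : ℝ) : tie B v i x ≤ 1 := by
  unfold tie; split_ifs <;> norm_num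

lemma tie_of_ne (B v : Fin 2 → ℝ) (i : Fin 2) {x : ℝ} (h : x ≠ Lval B v) :
    tie B v i x = 1 / 2 := by
  unfold tie
  rw [if_neg (by tauto), if_neg (by tauto)]

lemma measurable_tie (B v : Fin 2 → ℝ) (i : Fin 2) : Measurable (tie B v i) := by
  unfold tie
  have h1 : MeasurableSet {x : ℝ | x = Lval B v ∧
      min (B (1 - i)) (v (1 - i)) < min (B i) (v i)} := by
    by_cases hc : min (B (1 - i)) (v (1 - i)) < min (B i) (v i)
    · simp only [hc, and_true]; exact measurableSet_eq
    · simp only [hc, and_false]; exact MeasurableSet.empty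
  have h2 : MeasurableSet {x : ℝ | x = Lval B v ∧
      min (B i) (v i) < min (B (1 - i)) (v (1 - i))} := by
    by_cases hc : min (B i) (v i) < min (B (1 - i)) (v (1 - i))
    · simp only [hc, and_true]; exact measurableSet_eq
    · simp only [hc, and_false]; exact MeasurableSet.empty
  exact Measurable.ite h1 measurable_const (Measurable.ite h2 measurable_const measurable_const)

lemma winProb_eq (B v : Fin 2 → ℝ) (i : Fin 2) (x xo : ℝ) :
    winProb B v i x xo = (Iio x).indicator (fun _ => (1 : ℝ)) xo
      + tie B v i x * ({x} : Set ℝ).indicator (fun _ => (1 : ℝ)) xo := by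
  unfold winProb tie
  rcases lt_trichotomy xo x with h | h | h
  · rw [if_pos h]
    rw [indicator_of_mem (by exact h) , indicator_of_notMem (by simp [ne_of_lt h])]
    ring
  · subst h
    rw [if_neg (lt_irrefl _), if_neg (lt_irrefl _)]
    rw [indicator_of_notMem (by simp), indicator_of_mem (by simp)]
    split_ifs <;> ring
  · rw [if_neg (not_lt.mpr h.le), if_pos h]
    rw [indicator_of_notMem (by simp [not_lt.mpr h.le]),
      indicator_of_notMem (by simp [ne_of_gt h])]
    ring

/-- Expected payoff of player `i` from the pure bid `x` against the mixed strategy `ν`. -/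
def dev (B v : Fin 2 → ℝ) (i : Fin 2) (ν : Measure ℝ) (x : ℝ) : ℝ :=
  ∫ xo, payoff B v i x xo ∂ν

lemma dev_eq (B v : Fin 2 → ℝ) (i : Fin 2) (ν : Measure ℝ) [IsProbabilityMeasure ν] (x : ℝ) :
    dev B v i ν x
      = v i * ((ν (Iio x)).toReal + tie B v i x * (ν {x}).toReal) - x := by
  have hI1 : Integrable ((Iio x).indicator (fun _ => (1 : ℝ))) ν := by
    rw [integrable_indicator_iff measurableSet_Iio]
    exact integrableOn_const (measure_ne_top _ _)
  have hI2 : Integrable (fun xo => tie B v i x * ({x} : Set ℝ).indicator (fun _ => (1 : ℝ)) xo) ν := by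
    refine Integrable.const_mul ?_ _
    rw [integrable_indicator_iff (measurableSet_singleton x)]
    exact integrableOn_const (measure_ne_top _ _)
  have hwin : ∫ xo, winProb B v i x xo ∂ν
      = (ν (Iio x)).toReal + tie B v i x * (ν {x}).toReal := by
    have : ∀ xo, winProb B v i x xo = (Iio x).indicator (fun _ => (1 : ℝ)) xo
        + tie B v i x * ({x} : Set ℝ).indicator (fun _ => (1 : ℝ)) xo := winProb_eq B v i x
    rw [integral_congr_ae (Filter.Eventually.of_forall this), integral_add hI1 hI2,
      integral_indicator_const _ measurableSet_Iio, integral_const_mul,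
      integral_indicator_const _ (measurableSet_singleton x)]
    simp [mul_comm, measureReal_def]
  have hIw : Integrable (fun xo => winProb B v i x xo) ν := by
    refine (hI1.add hI2).congr (Filter.Eventually.of_forall fun xo => ?_)
    exact (winProb_eq B v i x xo).symm
  unfold dev payoff
  rw [integral_sub (hIw.mul_const _) (integrable_const _), integral_const, integral_mul_const,
    hwin]
  simp [mul_comm]
lemma Iic_split (ν : Measure ℝ) [IsFiniteMeasure ν] (x : ℝ) :
    (ν (Iic x)).toReal = (ν (Iio x)).toReal + (ν {x}).toReal := by
  have h : ν (Iic x) = ν (Iio x) + ν {x} := by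
    rw [← measure_union (by simp [disjoint_singleton_right]) (measurableSet_singleton x)]
    congr 1
    ext y
    simp [le_iff_lt_or_eq]
  rw [h, ENNReal.toReal_add (measure_ne_top _ _) (measure_ne_top _ _)]

lemma toReal_le_one (ν : Measure ℝ) [IsProbabilityMeasure ν] (S : Set ℝ) :
    (ν S).toReal ≤ 1 := by
  have := prob_le_one (μ := ν) (s := S)
  simpa using ENNReal.toReal_mono (by simp) this

lemma toReal_mono_meas (ν : Measure ℝ) [IsFiniteMeasure ν] {S T : Set ℝ} (h : S ⊆ T) :
    (ν S).toReal ≤ (ν T).toReal :=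
  ENNReal.toReal_mono (measure_ne_top _ _) (measure_mono h)

lemma dev_le_Iic (B v : Fin 2 → ℝ) (i : Fin 2) (ν : Measure ℝ) [IsProbabilityMeasure ν]
    (hvi : 0 < v i) (x : ℝ) :
    dev B v i ν x ≤ v i * (ν (Iic x)).toReal - x := by
  rw [dev_eq, Iic_split]
  have h1 : tie B v i x * (ν {x}).toReal ≤ (ν {x}).toReal :=
    mul_le_of_le_one_left ENNReal.toReal_nonneg (tie_le_one B v i x)
  nlinarith [hvi]

lemma dev_ge_Iio (B v : Fin 2 → ℝ) (i : Fin 2) (ν : Measure ℝ) [IsProbabilityMeasure ν]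
    (hvi : 0 < v i) (x : ℝ) :
    v i * (ν (Iio x)).toReal - x ≤ dev B v i ν x := by
  rw [dev_eq]
  have h1 : 0 ≤ tie B v i x * (ν {x}).toReal :=
    mul_nonneg (tie_nonneg B v i x) ENNReal.toReal_nonneg
  nlinarith [hvi]

lemma measurable_dev (B v : Fin 2 → ℝ) (i : Fin 2) (ν : Measure ℝ) [IsProbabilityMeasure ν] :
    Measurable (dev B v i ν) := by
  have hIio : Measurable fun x : ℝ => (ν (Iio x)).toReal := by
    apply Monotone.measurable
    intro a b hab
    exact toReal_mono_meas ν (Iio_subset_Iio hab)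
  have hIic : Measurable fun x : ℝ => (ν (Iic x)).toReal := by
    apply Monotone.measurable
    intro a b hab
    exact toReal_mono_meas ν (Iic_subset_Iic.2 hab)
  have hatom : Measurable fun x : ℝ => (ν {x}).toReal := by
    have : (fun x : ℝ => (ν {x}).toReal) = fun x => (ν (Iic x)).toReal - (ν (Iio x)).toReal := by
      funext x; rw [Iic_split]; ring
    rw [this]; exact hIic.sub hIio
  have : dev B v i ν = fun x =>
      v i * ((ν (Iio x)).toReal + tie B v i x * (ν {x}).toReal) - x := by
    funext x; exact dev_eq B v i ν x
  rw [this]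
  exact ((measurable_const.mul (hIio.add ((measurable_tie B v i).mul hatom)))).sub measurable_id
lemma strat_compl_null {Bi : ℝ} {μ : Measure ℝ} (h : IsStrategy Bi μ) :
    μ (Icc 0 Bi)ᶜ = 0 := by
  haveI := h.1
  rw [measure_compl measurableSet_Icc (measure_ne_top _ _), h.2, measure_univ]
  simp

lemma strat_ae_mem {Bi : ℝ} {μ : Measure ℝ} (h : IsStrategy Bi μ) :
    ∀ᵐ x ∂μ, x ∈ Icc 0 Bi := by
  have h0 := strat_compl_null h
  rw [ae_iff]
  refine measure_mono_null ?_ h0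
  intro y hy
  exact hy

lemma strat_null_of_subset_compl {Bi : ℝ} {μ : Measure ℝ} (h : IsStrategy Bi μ)
    {S : Set ℝ} (hS : S ⊆ (Icc 0 Bi)ᶜ) : μ S = 0 :=
  measure_mono_null hS (strat_compl_null h)

lemma integrable_dev (B v : Fin 2 → ℝ) (i : Fin 2) {ν : Measure ℝ} [IsProbabilityMeasure ν]
    (hvi : 0 < v i) {Bi : ℝ} {μ : Measure ℝ} (hμ : IsStrategy Bi μ) :
    Integrable (dev B v i ν) μ := by
  haveI := hμ.1
  refine Integrable.mono' (g := fun _ => v i + |Bi|) (integrable_const _)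
    (measurable_dev B v i ν).aestronglyMeasurable ?_
  filter_upwards [strat_ae_mem hμ] with x hx
  have h1 : dev B v i ν x ≤ v i * (ν (Iic x)).toReal - x := dev_le_Iic B v i ν hvi x
  have h2 : v i * (ν (Iio x)).toReal - x ≤ dev B v i ν x := dev_ge_Iio B v i ν hvi x
  have h3 : (ν (Iic x)).toReal ≤ 1 := toReal_le_one ν _
  have h4 : (0:ℝ) ≤ (ν (Iio x)).toReal := ENNReal.toReal_nonneg
  have hx0 : 0 ≤ x := hx.1
  have hxB : x ≤ Bi := hx.2
  rw [Real.norm_eq_abs, abs_le]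
  constructor <;> nlinarith [abs_nonneg Bi, le_abs_self Bi]

lemma expUtil_eq_integral_dev (B v : Fin 2 → ℝ) (i : Fin 2) (μ ν : Measure ℝ) :
    expUtil B v i μ ν = ∫ x, dev B v i ν x ∂μ := rfl

lemma dev_le_util (B v : Fin 2 → ℝ) {F : Fin 2 → Measure ℝ} (hN : IsNash B v F)
    (i : Fin 2) {x : ℝ} (hx : x ∈ Icc 0 (B i)) :
    dev B v i (F (1 - i)) x ≤ expUtil B v i (F i) (F (1 - i)) := by
  have hdir : IsStrategy (B i) (Measure.dirac x) := by
    refine ⟨inferInstance, ?_⟩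
    rw [Measure.dirac_apply' _ measurableSet_Icc, indicator_of_mem hx]
    rfl
  have := hN.2 i (Measure.dirac x) hdir
  rwa [expUtil, integral_dirac] at this

lemma ae_dev_eq (B v : Fin 2 → ℝ) {F : Fin 2 → Measure ℝ} (hN : IsNash B v F)
    (hv : ∀ i, 0 < v i) (i : Fin 2) :
    ∀ᵐ x ∂(F i), dev B v i (F (1 - i)) x = expUtil B v i (F i) (F (1 - i)) := by
  haveI h1 := (hN.1 i).1
  haveI h2 := (hN.1 (1 - i)).1
  set u := expUtil B v i (F i) (F (1 - i)) with hu
  have hle : ∀ᵐ x ∂(F i), dev B v i (F (1 - i)) x ≤ u := by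
    filter_upwards [strat_ae_mem (hN.1 i)] with x hx
    exact dev_le_util B v hN i hx
  have hint : Integrable (dev B v i (F (1 - i))) (F i) :=
    integrable_dev B v i (hv i) (hN.1 i)
  have hmean : ∫ x, (u - dev B v i (F (1 - i)) x) ∂(F i) = 0 := by
    rw [integral_sub (integrable_const _) hint, integral_const]
    simp [expUtil_eq_integral_dev] at hu ⊢
    rw [← hu]
    ring
  have hnn : 0 ≤ᵐ[F i] fun x => u - dev B v i (F (1 - i)) x := by
    filter_upwards [hle] with x hx
    simpa using hx
  have := (integral_eq_zero_iff_of_nonneg_ae hnn ((integrable_const u).sub hint)).1 hmean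
  filter_upwards [this] with x hx
  have : u - dev B v i (F (1 - i)) x = 0 := hx
  linarith

lemma eq_of_atom {μ : Measure ℝ} {P : ℝ → Prop} (h : ∀ᵐ x ∂μ, P x) {x : ℝ}
    (hx : μ {x} ≠ 0) : P x := by
  by_contra hP
  exact hx (measure_mono_null (by simpa [singleton_subset_iff] using hP) (ae_iff.1 h))

lemma exists_of_pos {μ : Measure ℝ} {P : ℝ → Prop} (h : ∀ᵐ x ∂μ, P x) {S : Set ℝ}
    (hS : μ S ≠ 0) : ∃ x ∈ S, P x := by
  have h2 : μ (S ∩ {x | P x}) ≠ 0 := by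
    intro hc
    apply hS
    have : S ⊆ (S ∩ {x | P x}) ∪ {x | ¬ P x} := by
      intro y hy
      by_cases hP : P y
      · exact Or.inl ⟨hy, hP⟩
      · exact Or.inr hP
    exact measure_mono_null this (measure_union_null hc (ae_iff.1 h))
  obtain ⟨x, hx⟩ := nonempty_of_measure_ne_zero h2
  exact ⟨x, hx.1, hx.2⟩
lemma supp_closed (μ : Measure ℝ) : IsClosed (supp μ) := by
  rw [← isOpen_compl_iff]
  rw [isOpen_iff_mem_nhds]
  intro x hx
  simp only [supp, mem_compl_iff, mem_setOf_eq, not_forall] at hx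
  obtain ⟨U, hU, hU0⟩ := hx
  push_neg at hU0
  obtain ⟨V, hVU, hVopen, hxV⟩ := mem_nhds_iff.1 hU
  filter_upwards [hVopen.mem_nhds hxV] with y hy
  simp only [supp, mem_compl_iff, mem_setOf_eq, not_forall]
  refine ⟨V, hVopen.mem_nhds hy, ?_⟩
  push_neg
  exact measure_mono_null hVU hU0

lemma supp_compl_null (μ : Measure ℝ) : μ (supp μ)ᶜ = 0 := by
  apply measure_null_of_locally_null
  intro x hx
  simp only [supp, mem_compl_iff, mem_setOf_eq, not_forall] at hx
  obtain ⟨U, hU, hU0⟩ := hx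
  push_neg at hU0
  exact ⟨U, nhdsWithin_le_nhds hU, hU0⟩

lemma supp_subset {Bi : ℝ} {μ : Measure ℝ} (h : IsStrategy Bi μ) :
    supp μ ⊆ Icc 0 Bi := by
  intro x hx
  by_contra hmem
  exact hx (Icc 0 Bi)ᶜ ((isClosed_Icc.isOpen_compl).mem_nhds hmem) (strat_compl_null h)

lemma supp_nonempty {Bi : ℝ} {μ : Measure ℝ} (h : IsStrategy Bi μ) :
    (supp μ).Nonempty := by
  haveI := h.1
  by_contra hne
  rw [not_nonempty_iff_eq_empty] at hne
  have : μ univ = 0 := by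
    have := supp_compl_null μ
    rwa [hne, compl_empty] at this
  simp [measure_univ] at this

lemma mem_supp_pos {μ : Measure ℝ} {x : ℝ} (hx : x ∈ supp μ) {a b : ℝ}
    (hab : x ∈ Ioo a b) : μ (Ioo a b) ≠ 0 :=
  hx _ (isOpen_Ioo.mem_nhds hab)

lemma zero_mem_supp {Bi : ℝ} {μ : Measure ℝ} (h : IsStrategy Bi μ)
    (h0 : sInf (supp μ) = 0) : (0 : ℝ) ∈ supp μ := by
  have := (supp_closed μ).csInf_mem (supp_nonempty h)
    (BddBelow.mono (supp_subset h) (bddBelow_Icc))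
  rwa [h0] at this

lemma sSup_mem_supp {Bi : ℝ} {μ : Measure ℝ} (h : IsStrategy Bi μ) :
    sSup (supp μ) ∈ supp μ :=
  (supp_closed μ).csSup_mem (supp_nonempty h)
    (BddAbove.mono (supp_subset h) (bddAbove_Icc))

lemma null_Ioi_sSup {Bi : ℝ} {μ : Measure ℝ} (h : IsStrategy Bi μ) :
    μ (Ioi (sSup (supp μ))) = 0 := by
  refine measure_mono_null ?_ (supp_compl_null μ)
  intro y hy
  intro hmem
  exact absurd (le_csSup (BddAbove.mono (supp_subset h) (bddAbove_Icc)) hmem)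
    (not_le.2 hy)

lemma le_of_forall_delta {u K ε : ℝ} (hε : 0 < ε) (h : ∀ δ, 0 < δ → δ < ε → u ≤ K + δ) :
    u ≤ K := by
  by_contra hc
  push_neg at hc
  have hδ : 0 < min (ε / 2) ((u - K) / 2) := lt_min (by linarith) (by linarith)
  have := h _ hδ (lt_of_le_of_lt (min_le_left _ _) (by linarith))
  have h2 : min (ε / 2) ((u - K) / 2) ≤ (u - K) / 2 := min_le_right _ _
  linarith

lemma ge_of_forall_delta {u K ε : ℝ} (hε : 0 < ε) (h : ∀ δ, 0 < δ → δ < ε → K - δ ≤ u) :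
    K ≤ u := by
  have := le_of_forall_delta (u := -u) (K := -K) hε (fun δ h1 h2 => by
    have := h δ h1 h2; linarith)
  linarith

lemma measure_Iic_zero {ν : Measure ℝ} (hν0 : ν (Iio 0) = 0) : ν (Iic 0) = ν {0} := by
  apply le_antisymm
  · have : Iic (0:ℝ) ⊆ Iio 0 ∪ {0} := by
      intro y hy
      rcases lt_or_eq_of_le (mem_Iic.1 hy) with h | h
      · exact Or.inl h
      · exact Or.inr h
    calc ν (Iic 0) ≤ ν (Iio 0 ∪ {0}) := measure_mono this
      _ ≤ ν (Iio 0) + ν {0} := measure_union_le _ _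
      _ = ν {0} := by rw [hν0, zero_add]
  · exact measure_mono (by intro y hy; simp at hy; simp [hy])

lemma le_mul_atom_zero {ν : Measure ℝ} [IsProbabilityMeasure ν] (hν0 : ν (Iio 0) = 0)
    {c u : ℝ} (h : ∀ δ : ℝ, 0 < δ → u ≤ c * (ν (Iio δ)).toReal) :
    u ≤ c * (ν {0}).toReal := by
  set S : ℕ → Set ℝ := fun n => Iio ((n + 1 : ℝ)⁻¹) with hS
  have hanti : Antitone S := by
    intro m n hmn
    apply Iio_subset_Iio
    apply inv_anti₀ (by positivity)
    exact_mod_cast by exact_mod_cast Nat.succ_le_succ hmn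
  have hiInter : ⋂ n, S n = Iic 0 := by
    ext y
    simp only [mem_iInter, hS, mem_Iio, mem_Iic]
    constructor
    · intro hy
      by_contra hy0
      push_neg at hy0
      obtain ⟨n, hn⟩ := exists_nat_gt y⁻¹
      have h1 : (0:ℝ) < y := hy0
      have h2 : (n + 1 : ℝ)⁻¹ < y := by
        rw [inv_lt_comm₀ (by positivity) h1]
        calc y⁻¹ < n := hn
          _ ≤ n + 1 := by linarith
      exact absurd (hy n) (not_lt.2 h2.le)
    · intro hy n
      exact lt_of_le_of_lt hy (by positivity)
  have htend : Filter.Tendsto (fun n => (ν (S n)).toReal) Filter.atTop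
      (nhds ((ν (Iic 0)).toReal)) := by
    have h1 : Filter.Tendsto (ν ∘ S) Filter.atTop (nhds (ν (⋂ n, S n))) :=
      tendsto_measure_iInter_atTop (fun n => (measurableSet_Iio).nullMeasurableSet)
        hanti ⟨0, measure_ne_top _ _⟩
    rw [hiInter] at h1
    exact (ENNReal.tendsto_toReal (measure_ne_top _ _)).comp h1
  have hle : ∀ n : ℕ, u ≤ c * (ν (S n)).toReal := fun n => h _ (by positivity)
  have := ge_of_tendsto' (htend.const_mul c) hle
  rwa [measure_Iic_zero hν0] at this
lemma Iic_one_of_Ioi_null {μ : Measure ℝ} [IsProbabilityMeasure μ] {x : ℝ}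
    (h : μ (Ioi x) = 0) : μ (Iic x) = 1 := by
  have := measure_compl (measurableSet_Ioi (a := x)) (measure_ne_top μ _)
  rw [compl_Ioi, h, measure_univ] at this
  simpa using this

lemma toReal_add_atom_le_one {μ : Measure ℝ} [IsProbabilityMeasure μ] {x y : ℝ}
    (hxy : x < y) : (μ (Iic x)).toReal + (μ {y}).toReal ≤ 1 := by
  have hd : Disjoint (Iic x) ({y} : Set ℝ) := by
    simp [disjoint_singleton_right, not_le.2 hxy]
  have h1 : μ (Iic x) + μ {y} = μ (Iic x ∪ {y}) :=
    (measure_union hd (measurableSet_singleton y)).symm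
  have h2 : (μ (Iic x ∪ {y})).toReal ≤ 1 := toReal_le_one μ _
  rw [← h1, ENNReal.toReal_add (measure_ne_top _ _) (measure_ne_top _ _)] at h2
  exact h2

lemma toReal_eq_one_of_one_le {μ : Measure ℝ} [IsProbabilityMeasure μ] {S T : Set ℝ}
    (hST : S ⊆ T) (hS : μ S = 1) : (μ T).toReal = 1 := by
  have h1 : μ T = 1 := le_antisymm prob_le_one (hS ▸ measure_mono hST)
  simp [h1]
set_option maxHeartbeats 2000000 in
/-- Endpoint behaviour in a Nash equilibrium with asymmetric budgets in which both
supports have infimum `0`, for the case `v_s = L` (where `s` is the player with the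
larger budget and `w = 1 - s` the other player): `s`'s expected utility is `0`,
`w`'s expected utility is `v_w - L`, `s` bids `0` with probability `(v_w - L)/v_w`
and puts no mass at `L`, while `w` puts no mass at either `0` or `L`. -/
theorem endpoint_masses_case2 (B v : Fin 2 → ℝ) (hB : ∀ i, 0 ≤ B i)
    (hv : ∀ i, 0 < v i) (F : Fin 2 → Measure ℝ) (hN : IsNash B v F)
    (s : Fin 2) (hs : B (1 - s) < B s)
    (h0 : ∀ i, sInf (supp (F i)) = 0)
    (hvs : v s = Lval B v) :
    expUtil B v s (F s) (F (1 - s)) = 0 ∧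
    expUtil B v (1 - s) (F (1 - s)) (F s) = v (1 - s) - Lval B v ∧
    (F s {0}).toReal = (v (1 - s) - Lval B v) / v (1 - s) ∧
    F s {Lval B v} = 0 ∧
    F (1 - s) {0} = 0 ∧
    F (1 - s) {Lval B v} = 0 := by
  have hww' : ∀ t : Fin 2, 1 - (1 - t) = t := by decide
  have hww : (1 : Fin 2) - (1 - s) = s := hww' s
  set μs := F s with hμs
  set μw := F (1 - s) with hμw
  haveI hPs : IsProbabilityMeasure μs := (hN.1 s).1
  haveI hPw : IsProbabilityMeasure μw := (hN.1 (1 - s)).1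
  set L := Lval B v with hLdef
  set us := expUtil B v s (F s) (F (1 - s)) with hus_def
  set uw := expUtil B v (1 - s) (F (1 - s)) (F s) with huw_def
  -- basic numeric facts
  have hmin_le : ∀ i : Fin 2, min (B 0) (B 1) ≤ B i ∧ min (v 0) (v 1) ≤ v i := by
    intro i; fin_cases i <;> exact ⟨by simp, by simp⟩
  have hLB : ∀ i, L ≤ B i := fun i =>
    le_trans (min_le_left _ _) (hmin_le i).1
  have hLv : ∀ i, L ≤ v i := fun i =>
    le_trans (min_le_right _ _) (hmin_le i).2
  have hLpos : 0 < L := hvs ▸ hv s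
  have hLBw : L ≤ B (1 - s) := hLB (1 - s)
  have hLBs : L ≤ B s := hLB s
  have hLvw : L ≤ v (1 - s) := hLv (1 - s)
  have hvw : 0 < v (1 - s) := hv (1 - s)
  have hmins : min (B s) (v s) = L := by
    rw [min_eq_right (hvs ▸ hLBs), hvs]
  have hminw : L ≤ min (B (1 - s)) (v (1 - s)) := le_min hLBw hLvw
  -- tie facts
  have hties : tie B v s L ≤ 1 / 2 := by
    unfold tie
    rw [if_neg (by rw [hmins]; intro hc; exact absurd hc.2 (not_lt.2 hminw))]
    split_ifs <;> norm_num
  have htiew : 1 / 2 ≤ tie B v (1 - s) L := by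
    unfold tie
    rw [hww, hmins]
    split_ifs with h1 h2
    · norm_num
    · exact absurd h2.2 (not_lt.2 hminw)
    · exact le_refl _
  -- deviation inequalities and a.e. equalities
  have hdevs_le : ∀ x ∈ Icc 0 (B s), dev B v s μw x ≤ us :=
    fun x hx => dev_le_util B v hN s hx
  have hdevw_le : ∀ x ∈ Icc 0 (B (1 - s)), dev B v (1 - s) μs x ≤ uw := by
    intro x hx
    have := dev_le_util B v hN (1 - s) hx
    rwa [hww] at this
  have haes : ∀ᵐ x ∂μs, dev B v s μw x = us := ae_dev_eq B v hN hv s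
  have haew : ∀ᵐ x ∂μw, dev B v (1 - s) μs x = uw := by
    have := ae_dev_eq B v hN hv (1 - s)
    rwa [hww] at this
  have haes' : ∀ᵐ x ∂μs, dev B v s μw x = us ∧ x ∈ Icc 0 (B s) :=
    haes.and (strat_ae_mem (hN.1 s))
  have haew' : ∀ᵐ x ∂μw, dev B v (1 - s) μs x = uw ∧ x ∈ Icc 0 (B (1 - s)) :=
    haew.and (strat_ae_mem (hN.1 (1 - s)))
  have hμsIio0 : μs (Iio 0) = 0 :=
    strat_null_of_subset_compl (hN.1 s) (fun y hy => by
      simp only [mem_compl_iff, mem_Icc, not_and, not_le]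
      intro h; exact absurd h (not_le.2 hy))
  have hμwIio0 : μw (Iio 0) = 0 :=
    strat_null_of_subset_compl (hN.1 (1 - s)) (fun y hy => by
      simp only [mem_compl_iff, mem_Icc, not_and, not_le]
      intro h; exact absurd h (not_le.2 hy))
  have hnulls : ∀ S : Set ℝ, (∀ x, x ∈ S → x ∈ Icc 0 (B s) → dev B v s μw x ≠ us) →
      μs S = 0 := by
    intro S hS
    refine measure_mono_null (fun x hx => ?_) (ae_iff.1 haes')
    intro hc
    exact hS x hx hc.2 hc.1
  have hnullw : ∀ S : Set ℝ, (∀ x, x ∈ S → x ∈ Icc 0 (B (1 - s)) →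
      dev B v (1 - s) μs x ≠ uw) → μw S = 0 := by
    intro S hS
    refine measure_mono_null (fun x hx => ?_) (ae_iff.1 haew')
    intro hc
    exact hS x hx hc.2 hc.1
  -- Step A : 0 ≤ us
  have husnn : 0 ≤ us := by
    have h1 := dev_ge_Iio B v s μw (hv s) 0
    have h2 := hdevs_le 0 ⟨le_refl 0, hB s⟩
    nlinarith [ENNReal.toReal_nonneg (a := μw (Iio 0)), hv s]
  -- Step B : μs (Ioi L) = 0 and Iic full
  have hμsIoiL : μs (Ioi L) = 0 := by
    refine hnulls _ (fun x hx hxIcc hdev => ?_)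
    have h1 := dev_le_Iic B v s μw (hv s) x
    have h2 := toReal_le_one μw (Iic x)
    have hxL : L < x := hx
    nlinarith [hv s, hvs]
  have hμsIicL : μs (Iic L) = 1 := Iic_one_of_Ioi_null hμsIoiL
  -- Step C : support facts
  have h0s : (0 : ℝ) ∈ supp μs := zero_mem_supp (hN.1 s) (h0 s)
  have h0w : (0 : ℝ) ∈ supp μw := zero_mem_supp (hN.1 (1 - s)) (h0 (1 - s))
  have hpos_s : ∀ δ : ℝ, 0 < δ → μs (Ioo (-δ) δ) ≠ 0 :=
    fun δ hδ => mem_supp_pos h0s ⟨neg_lt_zero.2 hδ, hδ⟩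
  have hpos_w : ∀ δ : ℝ, 0 < δ → μw (Ioo (-δ) δ) ≠ 0 :=
    fun δ hδ => mem_supp_pos h0w ⟨neg_lt_zero.2 hδ, hδ⟩
  -- Step D : us ≤ v s * μw{0}
  have hus_le : us ≤ v s * (μw {0}).toReal := by
    refine le_mul_atom_zero hμwIio0 (fun δ hδ => ?_)
    obtain ⟨x, hxS, hxdev, hxIcc⟩ := exists_of_pos haes' (hpos_s δ hδ)
    have h1 := dev_le_Iic B v s μw (hv s) x
    have h2 : (μw (Iic x)).toReal ≤ (μw (Iio δ)).toReal :=
      toReal_mono_meas _ (fun y hy => lt_of_le_of_lt hy hxS.2)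
    nlinarith [hv s, hxIcc.1]
  -- Step E : μw {0} = 0
  have hμw0 : μw {0} = 0 := by
    by_contra hb
    have h00 : dev B v (1 - s) μs 0 = uw := eq_of_atom haew hb
    have hdev0 : dev B v (1 - s) μs 0 = v (1 - s) * ((1 / 2) * (μs {0}).toReal) := by
      rw [dev_eq, hμsIio0, tie_of_ne B v (1 - s) (ne_of_lt hLpos)]
      simp
    have hge : v (1 - s) * (μs {0}).toReal ≤ uw := by
      refine ge_of_forall_delta hLpos (fun δ h1 h2 => ?_)
      have hδIcc : δ ∈ Icc 0 (B (1 - s)) := ⟨h1.le, le_trans h2.le hLBw⟩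
      have h3 := dev_ge_Iio B v (1 - s) μs hvw δ
      have h4 : (μs {0}).toReal ≤ (μs (Iio δ)).toReal :=
        toReal_mono_meas _ (by simp [singleton_subset_iff, h1])
      have h5 := hdevw_le δ hδIcc
      nlinarith
    have ha0 : (μs {0}).toReal = 0 := by
      nlinarith [ENNReal.toReal_nonneg (a := μs {0})]
    have hμs0 : μs {0} = 0 := by
      rcases (ENNReal.toReal_eq_zero_iff _).1 ha0 with h | h
      · exact h
      · exact absurd h (measure_ne_top _ _)
    have huw0 : uw = 0 := by rw [← h00, hdev0, ha0]; ring
    have hb0 : 0 < (μw {0}).toReal := ENNReal.toReal_pos hb (measure_ne_top _ _)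
    have husge : v s * (μw {0}).toReal ≤ us := by
      refine ge_of_forall_delta hLpos (fun δ h1 h2 => ?_)
      have hδIcc : δ ∈ Icc 0 (B s) := ⟨h1.le, le_trans h2.le hLBs⟩
      have h3 := dev_ge_Iio B v s μw (hv s) δ
      have h4 : (μw {0}).toReal ≤ (μw (Iio δ)).toReal :=
        toReal_mono_meas _ (by simp [singleton_subset_iff, h1])
      have h5 := hdevs_le δ hδIcc
      nlinarith [hv s]
    have huspos : 0 < us := lt_of_lt_of_le (mul_pos (hv s) hb0) husge
    set K := v s - us with hK
    have hKL : K < L := by rw [hK, hvs]; linarith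
    have hKnn : 0 ≤ K := by
      have := toReal_le_one μw {0}
      nlinarith [hv s]
    have hnullK : μs (Ioi K) = 0 := by
      refine hnulls _ (fun x hx hxIcc hdev => ?_)
      have h1 := dev_le_Iic B v s μw (hv s) x
      have h2 := toReal_le_one μw (Iic x)
      have hxK : K < x := hx
      nlinarith [hv s]
    have hIicK : μs (Iic K) = 1 := Iic_one_of_Ioi_null hnullK
    set x0 := (K + L) / 2 with hx0
    have hx0K : K < x0 := by rw [hx0]; linarith
    have hx0L : x0 < L := by rw [hx0]; linarith
    have hx0nn : 0 ≤ x0 := by rw [hx0]; linarith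
    have hIio1 : (μs (Iio x0)).toReal = 1 :=
      toReal_eq_one_of_one_le (fun y hy => lt_of_le_of_lt hy hx0K) hIicK
    have h6 := dev_ge_Iio B v (1 - s) μs hvw x0
    have h7 := hdevw_le x0 ⟨hx0nn, le_trans hx0L.le hLBw⟩
    rw [hIio1] at h6
    have : v (1 - s) - x0 ≤ uw := by linarith
    have : 0 < v (1 - s) - x0 := by linarith
    linarith
  -- Step F : us = 0
  have hus0 : us = 0 := by
    have : us ≤ 0 := by
      have h1 : (μw {0}).toReal = 0 := by simp [hμw0]
      nlinarith [hus_le]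
    linarith
  -- Step G : μs {L} = 0
  have hμsL : μs {L} = 0 := by
    by_contra ha
    have haR : 0 < (μs {L}).toReal := ENNReal.toReal_pos ha (measure_ne_top _ _)
    have hdevL : dev B v s μw L = us := eq_of_atom haes ha
    rw [hus0] at hdevL
    rw [dev_eq] at hdevL
    -- p + t q = 1
    have hE : v s * ((μw (Iio L)).toReal + tie B v s L * (μw {L}).toReal) = L := by
      linarith
    have hpq : (μw (Iio L)).toReal + tie B v s L * (μw {L}).toReal = 1 :=
      mul_left_cancel₀ (ne_of_gt (hv s))
        (by rw [mul_one, hE, hvs])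
    have hple : (μw (Iio L)).toReal + (μw {L}).toReal ≤ 1 := by
      rw [← Iic_split]; exact toReal_le_one μw _
    have hq0 : (μw {L}).toReal = 0 := by
      nlinarith [ENNReal.toReal_nonneg (a := μw {L}), hties]
    have hp1 : (μw (Iio L)).toReal = 1 := by nlinarith
    have hμwIioL : μw (Iio L) = 1 := (ENNReal.toReal_eq_one_iff _).1 hp1
    have hμwIciL : μw (Ici L) = 0 := by
      have := measure_compl (measurableSet_Iio (a := L)) (measure_ne_top μw _)
      rw [compl_Iio] at this
      rw [this, hμwIioL, measure_univ]
      simp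
    -- no gap below L in supp μw
    have hgap : ∀ δ : ℝ, 0 < δ → δ < L → μw (Ioo (L - δ) L) ≠ 0 := by
      intro δ h1 h2 hzero
      have hIoi : μw (Ioi (L - δ)) = 0 := by
        refine measure_mono_null (fun y hy => ?_) (measure_union_null hzero hμwIciL)
        rcases lt_or_ge y L with h | h
        · exact Or.inl ⟨hy, h⟩
        · exact Or.inr h
      have hIic1 : μw (Iic (L - δ)) = 1 := Iic_one_of_Ioi_null hIoi
      have hIio1 : (μw (Iio (L - δ / 2))).toReal = 1 :=
        toReal_eq_one_of_one_le
          (fun y hy => mem_Iio.2 (lt_of_le_of_lt (mem_Iic.1 hy) (by linarith : L - δ < L - δ / 2)))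
          hIic1
      have h3 := dev_ge_Iio B v s μw (hv s) (L - δ / 2)
      have h4 := hdevs_le (L - δ / 2) ⟨by linarith, le_trans (by linarith) hLBs⟩
      rw [hIio1] at h3
      rw [hus0] at h4
      have hvsL : v s = L := hvs
      nlinarith [h3, h4]
    -- uw ≤ vw (1 - a) - L
    have huwle : uw ≤ v (1 - s) * (1 - (μs {L}).toReal) - L := by
      refine le_of_forall_delta hLpos (fun δ h1 h2 => ?_)
      obtain ⟨x, hxS, hxdev, hxIcc⟩ := exists_of_pos haew' (hgap δ h1 h2)
      have h3 := dev_le_Iic B v (1 - s) μs hvw x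
      have h4 : (μs (Iic x)).toReal + (μs {L}).toReal ≤ 1 := toReal_add_atom_le_one hxS.2
      have h5 : L - δ < x := hxS.1
      nlinarith
    -- deviation at L
    have hdevwL : dev B v (1 - s) μs L ≤ uw := hdevw_le L ⟨hLpos.le, hLBw⟩
    have hIioLs : (μs (Iio L)).toReal = 1 - (μs {L}).toReal := by
      have := Iic_split μs L
      rw [hμsIicL] at this
      simp at this
      linarith
    rw [dev_eq, hIioLs] at hdevwL
    have h6 : (1 / 2) * (μs {L}).toReal ≤ tie B v (1 - s) L * (μs {L}).toReal :=
      mul_le_mul_of_nonneg_right htiew (le_of_lt haR)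
    have h7 := mul_le_mul_of_nonneg_left h6 (le_of_lt hvw)
    nlinarith [hdevwL, huwle, haR, hvw, h7]
  -- common fact
  have hμsL0R : (μs {L}).toReal = 0 := by simp [hμsL]
  have hIioLs1 : (μs (Iio L)).toReal = 1 := by
    have h1 := Iic_split μs L
    rw [hμsIicL, hμsL0R] at h1
    simp at h1
    linarith
  -- Step H : μw {L} = 0
  have hμwL : μw {L} = 0 := by
    by_contra hc
    have hcR : 0 < (μw {L}).toReal := ENNReal.toReal_pos hc (measure_ne_top _ _)
    have hcR1 : (μw {L}).toReal ≤ 1 := toReal_le_one μw _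
    have hdevwL : dev B v (1 - s) μs L = uw := eq_of_atom haew hc
    rw [dev_eq, hIioLs1, hμsL0R] at hdevwL
    have huwL : uw = v (1 - s) - L := by rw [← hdevwL]; ring
    have hnullK : μs (Ioi (L * (1 - (μw {L}).toReal))) = 0 := by
      refine hnulls _ (fun x hx hxIcc hdev => ?_)
      have hxK : L * (1 - (μw {L}).toReal) < x := hx
      rcases lt_trichotomy x L with hxL | hxL | hxL
      · have h1 := dev_le_Iic B v s μw (hv s) x
        have h4 := toReal_add_atom_le_one (μ := μw) hxL
        rw [hdev, hus0] at h1
        nlinarith [hv s, hvs, hcR]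
      · subst hxL
        rw [dev_eq, hus0] at hdev
        have hsplit := Iic_split μw L
        have h5 := toReal_le_one μw (Iic L)
        have h6 : tie B v s L * (μw {L}).toReal ≤ (1 / 2) * (μw {L}).toReal :=
          mul_le_mul_of_nonneg_right hties hcR.le
        have h7 := mul_le_mul_of_nonneg_left h6 (hv s).le
        nlinarith [hv s, hvs, hcR, ENNReal.toReal_nonneg (a := μw (Iio L))]
      · have h1 := dev_le_Iic B v s μw (hv s) x
        have h2 := toReal_le_one μw (Iic x)
        rw [hdev, hus0] at h1
        nlinarith [hv s, hvs, hcR]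
    have hIicK : μs (Iic (L * (1 - (μw {L}).toReal))) = 1 := Iic_one_of_Ioi_null hnullK
    have hx0gt : L * (1 - (μw {L}).toReal) < L * (1 - (μw {L}).toReal / 2) := by nlinarith
    have hx0lt : L * (1 - (μw {L}).toReal / 2) < L := by nlinarith
    have hx0nn : 0 ≤ L * (1 - (μw {L}).toReal / 2) := by nlinarith
    have hIio1 : (μs (Iio (L * (1 - (μw {L}).toReal / 2)))).toReal = 1 :=
      toReal_eq_one_of_one_le
        (fun y hy => mem_Iio.2 (lt_of_le_of_lt (mem_Iic.1 hy) hx0gt)) hIicK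
    have h3 := dev_ge_Iio B v (1 - s) μs hvw (L * (1 - (μw {L}).toReal / 2))
    have h4 := hdevw_le _ ⟨hx0nn, le_trans hx0lt.le hLBw⟩
    rw [hIio1] at h3
    rw [huwL] at h4
    nlinarith
  -- Step I : uw = v w - L
  have huwge : v (1 - s) - L ≤ uw := by
    have h1 := hdevw_le L ⟨hLpos.le, hLBw⟩
    rw [dev_eq, hIioLs1, hμsL0R] at h1
    have h2 : v (1 - s) * (1 + tie B v (1 - s) L * 0) = v (1 - s) := by ring
    linarith [h1, h2.symm ▸ h1]
  have hmmem : sSup (supp μw) ∈ supp μw := sSup_mem_supp (hN.1 (1 - s))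
  have hmIcc : sSup (supp μw) ∈ Icc 0 (B (1 - s)) := supp_subset (hN.1 (1 - s)) hmmem
  have hIoim : μw (Ioi (sSup (supp μw))) = 0 := null_Ioi_sSup (hN.1 (1 - s))
  have hmge : L ≤ sSup (supp μw) := by
    by_contra hlt
    push_neg at hlt
    have hIicm : μw (Iic (sSup (supp μw))) = 1 := Iic_one_of_Ioi_null hIoim
    have hIio1 : (μw (Iio ((sSup (supp μw) + L) / 2))).toReal = 1 :=
      toReal_eq_one_of_one_le
        (fun y hy => mem_Iio.2 (lt_of_le_of_lt (mem_Iic.1 hy) (by linarith))) hIicm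
    have h3 := dev_ge_Iio B v s μw (hv s) ((sSup (supp μw) + L) / 2)
    have h4 := hdevs_le ((sSup (supp μw) + L) / 2)
      ⟨by linarith [hmIcc.1], le_trans (by linarith) hLBs⟩
    rw [hIio1] at h3
    rw [hus0] at h4
    have hvsL : v s = L := hvs
    nlinarith
  have huwle2 : uw ≤ v (1 - s) - sSup (supp μw) := by
    refine le_of_forall_delta (ε := 1) one_pos (fun δ h1 h2 => ?_)
    obtain ⟨x, hxS, hxdev, hxIcc⟩ := exists_of_pos haew'
      (mem_supp_pos hmmem (a := sSup (supp μw) - δ) (b := sSup (supp μw) + δ)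
        ⟨by linarith, by linarith⟩)
    have h3 := dev_le_Iic B v (1 - s) μs hvw x
    have h4 := toReal_le_one μs (Iic x)
    have h5 : sSup (supp μw) - δ < x := hxS.1
    nlinarith
  have huw_eq : uw = v (1 - s) - L := le_antisymm (by linarith) huwge
  -- Step J : μs {0}
  have hDw : ∀ δ : ℝ, 0 < δ → uw ≤ v (1 - s) * (μs (Iio δ)).toReal := by
    intro δ hδ
    obtain ⟨x, hxS, hxdev, hxIcc⟩ := exists_of_pos haew' (hpos_w δ hδ)
    have h1 := dev_le_Iic B v (1 - s) μs hvw x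
    have h2 : (μs (Iic x)).toReal ≤ (μs (Iio δ)).toReal :=
      toReal_mono_meas _ (fun y hy => mem_Iio.2 (lt_of_le_of_lt (mem_Iic.1 hy) hxS.2))
    nlinarith [hxIcc.1, hvw]
  have huw_le_atom : uw ≤ v (1 - s) * (μs {0}).toReal := le_mul_atom_zero hμsIio0 hDw
  have huw_ge_atom : v (1 - s) * (μs {0}).toReal ≤ uw := by
    refine ge_of_forall_delta hLpos (fun δ h1 h2 => ?_)
    have h3 := dev_ge_Iio B v (1 - s) μs hvw δ
    have h4 : (μs {0}).toReal ≤ (μs (Iio δ)).toReal :=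
      toReal_mono_meas _ (by simp [singleton_subset_iff, h1])
    have h5 := hdevw_le δ ⟨h1.le, le_trans h2.le hLBw⟩
    nlinarith
  have hFs0 : (μs {0}).toReal = (v (1 - s) - L) / v (1 - s) := by
    rw [eq_div_iff (ne_of_gt hvw)]
    nlinarith [huw_le_atom, huw_ge_atom, huw_eq]
  exact ⟨hus0, huw_eq, hFs0, hμsL, hμw0, hμwL⟩
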